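/- The Scott order on configurations of a game is a partial order: it is reflexive, transitive, and antisymmetric. -/
import Mathlib


structure EventStructure (E : Type) where
  le : E → E → Prop
  conflict : E → E → Prop
  le_refl : ∀ e, le e e
  le_trans : ∀ {a b c}, le a b → le b c → le a c
  le_antisymm : ∀ {a b}, le a b → le b a → a = b
  finite_causes : ∀ e, {e' | le e' e}.Finite
  conflict_irrefl : ∀ e, ¬ conflict e e
  conflict_symm : ∀ {a b}, conflict a b → conflict b a
  conflict_le : ∀ {a b c}, conflict a b → le b c → conflict a c

/-- A configuration: consistent and down-closed subset of events. -/
def IsConfig {E : Type} (ES : EventStructure E) (x : Set E) : Prop :=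
  (∀ e ∈ x, ∀ e' ∈ x, ¬ ES.conflict e e') ∧
  (∀ e ∈ x, ∀ e', ES.le e' e → e' ∈ x)

/-- A total map of event structures: sends configurations to configurations
and is injective on each configuration. -/
def IsMapES {E E' : Type} (ES : EventStructure E) (ES' : EventStructure E')
    (f : E → E') : Prop :=
  (∀ x, IsConfig ES x → IsConfig ES' (f '' x)) ∧
  (∀ x, IsConfig ES x → ∀ e ∈ x, ∀ e' ∈ x, f e = f e' → e = e')

/-- A rigid map: preserves causal dependency. -/
def RigidMap {E E' : Type} (ES : EventStructure E) (ES' : EventStructure E')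
    (f : E → E') : Prop :=
  ∀ a b, ES.le a b → ES'.le (f a) (f b)

/-- An open map: rigid, with configuration-lifting of extensions. -/
def OpenMapES {E E' : Type} (ES : EventStructure E) (ES' : EventStructure E')
    (f : E → E') : Prop :=
  RigidMap ES ES' f ∧
  ∀ x y, IsConfig ES x → IsConfig ES' y → f '' x ⊆ y →
    ∃ z, IsConfig ES z ∧ x ⊆ z ∧ f '' z = y

/-- Positive part of a set of events, w.r.t. a polarity function (`true` = Player `+`). -/
def posPart {E : Type} (pol : E → Bool) (x : Set E) : Set E := {e ∈ x | pol e = true}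

/-- Negative part of a set of events. -/
def negPart {E : Type} (pol : E → Bool) (x : Set E) : Set E := {e ∈ x | pol e = false}

/-- The Scott order on configurations: `y ⊑ x` iff `y⁻ ⊇ x⁻` and `y⁺ ⊆ x⁺`. -/
def ScottLE {E : Type} (pol : E → Bool) (y x : Set E) : Prop :=
  negPart pol x ⊆ negPart pol y ∧ posPart pol y ⊆ posPart pol x

theorem scott_order_is_partial_order
    {E : Type} (ES : EventStructure E) (pol : E → Bool) :
    (∀ x, IsConfig ES x → ScottLE pol x x) ∧
    (∀ x y z, IsConfig ES x → IsConfig ES y → IsConfig ES z →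
      ScottLE pol z y → ScottLE pol y x → ScottLE pol z x) ∧
    (∀ x y, IsConfig ES x → IsConfig ES y →
      ScottLE pol y x → ScottLE pol x y → x = y) := by
  refine ⟨fun x _ => ⟨subset_rfl, subset_rfl⟩,
    fun x y z _ _ _ h1 h2 => ⟨h2.1.trans h1.1, h1.2.trans h2.2⟩,
    fun x y _ _ h1 h2 => ?_⟩
  ext e
  rcases Bool.eq_false_or_eq_true (pol e) with hp | hp
  · exact ⟨fun he => (h2.2 ⟨he, hp⟩).1, fun he => (h1.2 ⟨he, hp⟩).1⟩
  · exact ⟨fun he => (h1.1 ⟨he, hp⟩).1, fun he => (h2.1 ⟨he, hp⟩).1⟩
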